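/- Let d ∈ ℕ, ε, T > 0, let 𝒪 ⊆ ℝ^d be a non-empty open set, let u : (0,T) × 𝒪 → ℝ be upper semi-continuous, let t ∈ (0,T), x ∈ 𝒪, and let (b,p,A) be an element of the parabolic superjet of u at (t,x). Then there exists φ ∈ C^{1,2}((0,T) × 𝒪, ℝ) such that (i) (b, p, A + ε·Id) = ((∂φ/∂t)(t,x), (∇_x φ)(t,x), (Hess_x φ)(t,x)) and (ii) u − φ has a local maximum at (t,x). -/

import Mathlib

open Set Filter Topology Matrix
open scoped NNReal RealInnerProductSpace

noncomputable section

/-- Euclidean space `ℝ^d`. -/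
abbrev E (d : ℕ) := EuclideanSpace ℝ (Fin d)

/-- The partial derivative in the time variable. -/
noncomputable def ptime {d : ℕ} (φ : ℝ → E d → ℝ) (t : ℝ) (x : E d) : ℝ :=
  deriv (fun s => φ s x) t

/-- The spatial gradient. -/
noncomputable def pgrad {d : ℕ} (φ : ℝ → E d → ℝ) (t : ℝ) (x : E d) : E d :=
  gradient (fun y => φ t y) x

/-- The spatial Hessian, as a `d × d` matrix of second partial derivatives. -/
noncomputable def phess {d : ℕ} (φ : ℝ → E d → ℝ) (t : ℝ) (x : E d) :
    Matrix (Fin d) (Fin d) ℝ :=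
  fun i j => fderiv ℝ (fun y => fderiv ℝ (fun z => φ t z) y (EuclideanSpace.single j 1)) x
    (EuclideanSpace.single i 1)

/-- `φ` is of class `C^{1,2}` on `(0,T) × O`:  jointly continuous, continuously differentiable
in the time variable, twice continuously differentiable in the space variable, with jointly
continuous time derivative, spatial gradient and spatial Hessian. -/
def C12On {d : ℕ} (T : ℝ) (O : Set (E d)) (φ : ℝ → E d → ℝ) : Prop :=
  ContinuousOn (fun p : ℝ × E d => φ p.1 p.2) (Ioo 0 T ×ˢ O) ∧
  (∀ t ∈ Ioo (0:ℝ) T, ∀ x ∈ O, HasDerivAt (fun s => φ s x) (ptime φ t x) t) ∧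
  (∀ t ∈ Ioo (0:ℝ) T, ∀ x ∈ O, ContDiffAt ℝ 2 (fun y => φ t y) x) ∧
  ContinuousOn (fun p : ℝ × E d => ptime φ p.1 p.2) (Ioo 0 T ×ˢ O) ∧
  ContinuousOn (fun p : ℝ × E d => pgrad φ p.1 p.2) (Ioo 0 T ×ˢ O) ∧
  ContinuousOn (fun p : ℝ × E d => phess φ p.1 p.2) (Ioo 0 T ×ˢ O)

/-- `G` is degenerate elliptic on `(0,T) × O × ℝ × ℝ^d × S_d`: it is monotone in the matrix
argument with respect to the Loewner order on symmetric matrices. -/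
def DegenerateElliptic {d : ℕ} (T : ℝ) (O : Set (E d))
    (G : ℝ → E d → ℝ → E d → Matrix (Fin d) (Fin d) ℝ → ℝ) : Prop :=
  ∀ t ∈ Ioo (0:ℝ) T, ∀ x ∈ O, ∀ (r : ℝ) (p : E d) (A B : Matrix (Fin d) (Fin d) ℝ),
    A.IsSymm → B.IsSymm → (∀ y : Fin d → ℝ, A.mulVec y ⬝ᵥ y ≤ B.mulVec y ⬝ᵥ y) →
    G t x r p A ≤ G t x r p B

/-- `u` is a viscosity subsolution of
`∂ₜ u + G(t,x,u,∇ₓu,Hessₓu) = 0` on `(0,T) × O`. -/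
def IsViscositySubsolution {d : ℕ} (T : ℝ) (O : Set (E d))
    (G : ℝ → E d → ℝ → E d → Matrix (Fin d) (Fin d) ℝ → ℝ) (u : ℝ → E d → ℝ) : Prop :=
  UpperSemicontinuousOn (fun p : ℝ × E d => u p.1 p.2) (Ioo 0 T ×ˢ O) ∧
  ∀ t ∈ Ioo (0:ℝ) T, ∀ x ∈ O, ∀ φ : ℝ → E d → ℝ, C12On T O φ →
    (∀ s ∈ Ioo (0:ℝ) T, ∀ y ∈ O, u s y ≤ φ s y) → φ t x = u t x →
    0 ≤ ptime φ t x + G t x (φ t x) (pgrad φ t x) (phess φ t x)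

/-- `u` is a viscosity supersolution of
`∂ₜ u + G(t,x,u,∇ₓu,Hessₓu) = 0` on `(0,T) × O`. -/
def IsViscositySupersolution {d : ℕ} (T : ℝ) (O : Set (E d))
    (G : ℝ → E d → ℝ → E d → Matrix (Fin d) (Fin d) ℝ → ℝ) (u : ℝ → E d → ℝ) : Prop :=
  LowerSemicontinuousOn (fun p : ℝ × E d => u p.1 p.2) (Ioo 0 T ×ˢ O) ∧
  ∀ t ∈ Ioo (0:ℝ) T, ∀ x ∈ O, ∀ φ : ℝ → E d → ℝ, C12On T O φ →
    (∀ s ∈ Ioo (0:ℝ) T, ∀ y ∈ O, φ s y ≤ u s y) → φ t x = u t x →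
    ptime φ t x + G t x (φ t x) (pgrad φ t x) (phess φ t x) ≤ 0

/-- `u` is a viscosity solution of `∂ₜ u + G(t,x,u,∇ₓu,Hessₓu) = 0` on `(0,T) × O`. -/
def IsViscositySolution {d : ℕ} (T : ℝ) (O : Set (E d))
    (G : ℝ → E d → ℝ → E d → Matrix (Fin d) (Fin d) ℝ → ℝ) (u : ℝ → E d → ℝ) : Prop :=
  IsViscositySubsolution T O G u ∧ IsViscositySupersolution T O G u

/-- `(b, p, A)` belongs to the parabolic superjet of `u` at `(t,x)` (relative to
`(0,T) × O`):  `A` is symmetric and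
`limsup_{(s,y)→(t,x)} [u(s,y) − u(t,x) − b(s−t) − ⟪p, y−x⟫ − ½⟪A(y−x), y−x⟫] / (|t−s| + ‖x−y‖²) ≤ 0`. -/
def MemSuperjet {d : ℕ} (T : ℝ) (O : Set (E d)) (u : ℝ → E d → ℝ) (t : ℝ) (x : E d)
    (b : ℝ) (p : E d) (A : Matrix (Fin d) (Fin d) ℝ) : Prop :=
  A.IsSymm ∧
  ∀ ε > (0:ℝ), ∀ᶠ q : ℝ × E d in 𝓝[(Ioo 0 T ×ˢ O) \ {(t, x)}] (t, x),
    u q.1 q.2 - u t x - b * (q.1 - t) - (inner ℝ p (q.2 - x) : ℝ)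
      - (1/2) * (A.mulVec (fun i => (q.2 - x) i) ⬝ᵥ (fun i => (q.2 - x) i))
    ≤ ε * (|t - q.1| + ‖x - q.2‖ ^ 2)

end

section
open intervalIntegral MeasureTheory

lemma exists_C1_majorant (m : ℝ → ℝ) (hmono : Monotone m) (hm0 : ∀ r ≤ (0:ℝ), m r = 0)
    (hnn : ∀ r, 0 ≤ m r)
    (hlil : ∀ e > (0:ℝ), ∃ δ > (0:ℝ), ∀ r ∈ Icc (0:ℝ) δ, m r ≤ e * r) :
    ∃ W g : ℝ → ℝ, Continuous g ∧ (∀ r, HasDerivAt W (g r) r) ∧ g 0 = 0 ∧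
      (∀ r, 0 ≤ W r) ∧ W 0 = 0 ∧ (∀ r ≥ (0:ℝ), m r ≤ W r) := by
  set M : ℝ → ℝ := fun r => ∫ τ in (0:ℝ)..r, m (4*τ) with hMdef
  have hmono4 : Monotone (fun τ : ℝ => m (4*τ)) := hmono.comp (fun a b h => by linarith)
  have hint : ∀ a b : ℝ, IntervalIntegrable (fun τ => m (4*τ)) volume a b :=
    fun a b => hmono4.intervalIntegrable
  have hMcont : Continuous M := intervalIntegral.continuous_primitive hint 0
  have hMadd : ∀ a b : ℝ, M b - M a = ∫ τ in a..b, m (4*τ) := by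
    intro a b
    have := intervalIntegral.integral_add_adjacent_intervals (hint 0 a) (hint a b)
    simp only [hMdef]; linarith [this]
  have hMmono : Monotone M := by
    intro a b hab
    have h := hMadd a b
    have : 0 ≤ ∫ τ in a..b, m (4*τ) :=
      intervalIntegral.integral_nonneg hab (fun τ _ => hnn _)
    linarith
  have hMnn : ∀ r, 0 ≤ M r := by
    intro r
    rcases le_or_gt 0 r with h | h
    · exact intervalIntegral.integral_nonneg h (fun τ _ => hnn _)
    · have : M r = ∫ τ in (0:ℝ)..r, m (4*τ) := rfl
      rw [this, intervalIntegral.integral_symm]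
      have hz : ∫ τ in r..(0:ℝ), m (4*τ) = ∫ τ in r..(0:ℝ), (0:ℝ) := by
        apply intervalIntegral.integral_congr
        intro τ hτ
        rw [uIcc_of_le h.le] at hτ
        exact hm0 _ (by nlinarith [hτ.2])
      rw [hz]; simp
  have hMupper : ∀ r ≥ (0:ℝ), M r ≤ r * m (4*r) := by
    intro r hr
    calc M r ≤ ∫ _ in (0:ℝ)..r, m (4*r) := by
          apply intervalIntegral.integral_mono_on hr (hint 0 r)
            (intervalIntegrable_const)
          intro τ hτ; exact hmono (by nlinarith [hτ.2])
      _ = r * m (4*r) := by simp [smul_eq_mul]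
  have hMlower : ∀ r ≥ (0:ℝ), (r/2) * m (2*r) ≤ M r := by
    intro r hr
    have h1 : M r - M (r/2) = ∫ τ in (r/2)..r, m (4*τ) := hMadd _ _
    have h2 : (∫ _ in (r/2)..r, m (2*r)) ≤ ∫ τ in (r/2)..r, m (4*τ) := by
      apply intervalIntegral.integral_mono_on (by linarith) intervalIntegrable_const
        (hint _ _)
      intro τ hτ; exact hmono (by nlinarith [hτ.1])
    have h3 : (∫ _ in (r/2)..r, m (2*r)) = (r/2) * m (2*r) := by
      rw [intervalIntegral.integral_const, smul_eq_mul]; ring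
    have h4 := hMmono (show 0 ≤ r/2 by linarith)
    have hM0 : M 0 = 0 := by simp [hMdef]
    rw [hM0] at h4
    linarith
  set g : ℝ → ℝ := fun τ => if τ ≤ 0 then 0 else 4 * M (2*τ) / τ^2 with hgdef
  have hg0 : g 0 = 0 := by simp [hgdef]
  have hgnn : ∀ τ, 0 ≤ g τ := by
    intro τ
    simp only [hgdef]
    split
    · exact le_refl 0
    · exact div_nonneg (by nlinarith [hMnn (2*τ)]) (sq_nonneg τ)
  have hgcont : Continuous g := by
    rw [continuous_iff_continuousAt]
    intro τ₀
    rcases lt_trichotomy τ₀ 0 with h | h | h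
    · have : ∀ᶠ τ in 𝓝 τ₀, g τ = 0 := by
        filter_upwards [Iio_mem_nhds h] with τ hτ
        simp only [hgdef]; rw [if_pos (le_of_lt hτ)]
      exact continuousAt_const.congr (by filter_upwards [this] with τ hτ using hτ.symm)
    · subst h
      rw [ContinuousAt, hg0, Metric.tendsto_nhds_nhds]
      intro e he
      obtain ⟨δ₁, hδ₁, hδ⟩ := hlil (e/65) (by positivity)
      refine ⟨δ₁/8, by positivity, ?_⟩
      intro τ hτ
      rw [Real.dist_eq, sub_zero] at hτ ⊢
      rcases le_or_gt τ 0 with hle | hpos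
      · simp only [hgdef]; rw [if_pos hle, abs_zero]; exact he
      · have hgτ : g τ = 4 * M (2*τ) / τ^2 := by simp only [hgdef]; rw [if_neg (not_le.mpr hpos)]
        have h1 : M (2*τ) ≤ (2*τ) * m (8*τ) := by
          have := hMupper (2*τ) (by linarith)
          convert this using 3; ring
        have h2 : m (8*τ) ≤ (e/65) * (8*τ) := by
          apply hδ
          constructor
          · linarith
          · rw [abs_of_pos hpos] at hτ; linarith
        have habs : |g τ| = g τ := abs_of_nonneg (hgnn τ)
        rw [habs, hgτ, div_lt_iff₀ (by positivity)]
        have hh := mul_le_mul_of_nonneg_left h2 (show (0:ℝ) ≤ 2*τ by linarith)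
        have hp : 0 < e * τ^2 := by positivity
        nlinarith
    · have key : ∀ᶠ τ in 𝓝 τ₀, g τ = 4 * M (2*τ) / τ^2 := by
        filter_upwards [Ioi_mem_nhds h] with τ hτ
        simp only [hgdef]; rw [if_neg (not_le.mpr hτ)]
      have hc : ContinuousAt (fun τ => 4 * M (2*τ) / τ^2) τ₀ := by
        apply ContinuousAt.div
        · exact (continuous_const.mul (hMcont.comp (continuous_const.mul continuous_id))).continuousAt
        · exact (continuous_pow 2).continuousAt
        · exact pow_ne_zero 2 (ne_of_gt h)
      exact hc.congr (by filter_upwards [key] with τ hτ using hτ.symm)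
  set W : ℝ → ℝ := fun r => ∫ τ in (0:ℝ)..r, g τ with hWdef
  have hW' : ∀ r, HasDerivAt W (g r) r := fun r => (hgcont.integral_hasStrictDerivAt 0 r).hasDerivAt
  have hWadd : ∀ a b : ℝ, W b - W a = ∫ τ in a..b, g τ := by
    intro a b
    have := intervalIntegral.integral_add_adjacent_intervals
      (hgcont.intervalIntegrable (μ := volume) 0 a) (hgcont.intervalIntegrable (μ := volume) a b)
    simp only [hWdef]; linarith [this]
  have hW0 : W 0 = 0 := by simp [hWdef]
  have hWnn : ∀ r, 0 ≤ W r := by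
    intro r
    rcases le_or_gt 0 r with h | h
    · exact intervalIntegral.integral_nonneg h (fun τ _ => hgnn _)
    · have : W r = ∫ τ in (0:ℝ)..r, g τ := rfl
      rw [this, intervalIntegral.integral_symm]
      have hz : ∫ τ in r..(0:ℝ), g τ = ∫ τ in r..(0:ℝ), (0:ℝ) := by
        apply intervalIntegral.integral_congr
        intro τ hτ
        rw [uIcc_of_le h.le] at hτ
        simp only [hgdef]; rw [if_pos hτ.2]
      rw [hz]; simp
  refine ⟨W, g, hgcont, hW', hg0, hWnn, hW0, ?_⟩
  intro r hr
  rcases eq_or_lt_of_le hr with h | hrpos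
  · rw [← h, hm0 0 le_rfl, hW0]
  have h1 : W r - W (r/2) = ∫ τ in (r/2)..r, g τ := hWadd _ _
  have h2 : (∫ _ in (r/2)..r, (4 * M r / r^2 : ℝ)) ≤ ∫ τ in (r/2)..r, g τ := by
    apply intervalIntegral.integral_mono_on (by linarith) intervalIntegrable_const
      (hgcont.intervalIntegrable (μ := volume) _ _)
    intro τ hτ
    have hτpos : 0 < τ := lt_of_lt_of_le (by linarith) hτ.1
    have hgτ : g τ = 4 * M (2*τ) / τ^2 := by simp only [hgdef]; rw [if_neg (not_le.mpr hτpos)]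
    rw [hgτ, div_le_div_iff₀ (by positivity) (by positivity)]
    have hMle : M r ≤ M (2*τ) := hMmono (by linarith [hτ.1])
    have e1 : M r * τ^2 ≤ M r * r^2 :=
      mul_le_mul_of_nonneg_left (by nlinarith [hτ.2, hτpos]) (hMnn r)
    have e2 : M r * r^2 ≤ M (2*τ) * r^2 := by nlinarith [sq_nonneg r]
    nlinarith
  have h3 : (∫ _ in (r/2)..r, (4 * M r / r^2 : ℝ)) = (r/2) * (4 * M r / r^2) := by
    rw [intervalIntegral.integral_const, smul_eq_mul]; ring
  have h4 : m r ≤ (r/2) * (4 * M r / r^2) := by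
    have hml := hMlower r hr
    have hmm : m r ≤ m (2*r) := hmono (by linarith)
    rw [show (r/2) * (4 * M r / r^2) = (2 * M r)/r by field_simp; ring,
      le_div_iff₀ (by positivity)]
    nlinarith
  have h5 := hWnn (r/2)
  linarith

end

noncomputable section

variable {d : ℕ}



lemma coord_hasFDerivAt (x : E d) (j : Fin d) (y : E d) :
    HasFDerivAt (fun z : E d => (z - x) j) (EuclideanSpace.proj j : E d →L[ℝ] ℝ) y := by
  have h : (fun z : E d => (z - x) j) = fun z : E d => (EuclideanSpace.proj j : E d →L[ℝ] ℝ) z - x j := by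
    funext z; simp [PiLp.sub_apply]
  rw [h]
  exact ((EuclideanSpace.proj j : E d →L[ℝ] ℝ).hasFDerivAt).sub_const _

lemma quadform_eq (B : Matrix (Fin d) (Fin d) ℝ) (x : E d) (y : E d) :
    B.mulVec (fun i => (y - x) i) ⬝ᵥ (fun i => (y - x) i)
      = ∑ i, ∑ j, (B i j * (y - x) j) * (y - x) i := by
  simp [Matrix.mulVec, dotProduct, Finset.sum_mul]

lemma quad_hasFDerivAt (B : Matrix (Fin d) (Fin d) ℝ) (x : E d) (y : E d) :
    HasFDerivAt (fun z : E d => ∑ i, ∑ j, (B i j * (z - x) j) * (z - x) i)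
      (∑ i, ∑ j, ((B i j * (y - x) j) • (EuclideanSpace.proj i : E d →L[ℝ] ℝ)
        + ((y - x) i) • (B i j • (EuclideanSpace.proj j : E d →L[ℝ] ℝ)))) y := by
  apply HasFDerivAt.fun_sum
  intro i _
  apply HasFDerivAt.fun_sum
  intro j _
  exact ((coord_hasFDerivAt x j y).const_mul (B i j)).mul (coord_hasFDerivAt x i y)

lemma quadCLM_apply (B : Matrix (Fin d) (Fin d) ℝ) (x : E d) (y : E d) (k : Fin d) :
    (∑ i, ∑ j, ((B i j * (y - x) j) • (EuclideanSpace.proj i : E d →L[ℝ] ℝ)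
        + ((y - x) i) • (B i j • (EuclideanSpace.proj j : E d →L[ℝ] ℝ))))
      (EuclideanSpace.single k 1)
    = (∑ j, B k j * (y - x) j) + ∑ i, B i k * (y - x) i := by
  simp only [ContinuousLinearMap.coe_sum', Finset.sum_apply, ContinuousLinearMap.add_apply,
    ContinuousLinearMap.coe_smul', Pi.smul_apply, PiLp.proj_apply,
    EuclideanSpace.single_apply, smul_eq_mul]
  have h1 : ∀ i : Fin d, ∑ j, ((B i j * (y - x) j) * (if i = k then 1 else 0)
      + (y - x) i * (B i j * (if j = k then 1 else 0)))
      = (if i = k then ∑ j, B i j * (y - x) j else 0) + (y - x) i * B i k := by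
    intro i
    rw [Finset.sum_add_distrib]
    congr 1
    · split <;> simp [Finset.sum_mul]
    · simp [mul_ite, Finset.mul_sum]
  rw [Finset.sum_congr rfl (fun i _ => h1 i), Finset.sum_add_distrib,
    Finset.sum_ite_eq' Finset.univ k]
  simp only [Finset.mem_univ, if_true]
  congr 1
  exact Finset.sum_congr rfl fun i _ => mul_comm _ _

lemma inner_hasFDerivAt (p x : E d) (y : E d) :
    HasFDerivAt (fun z : E d => (inner ℝ p (z - x) : ℝ)) (innerSL ℝ p) y := by
  have h : (fun z : E d => (inner ℝ p (z - x) : ℝ))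
      = fun z : E d => (innerSL ℝ p) z - (inner ℝ p x : ℝ) := by
    funext z; simp [inner_sub_right]
  rw [h]
  exact (innerSL ℝ p).hasFDerivAt.sub_const _

lemma psi_hasFDerivAt (B : Matrix (Fin d) (Fin d) ℝ) (p x : E d) (y : E d) :
    HasFDerivAt (fun z : E d => (inner ℝ p (z - x) : ℝ)
        + (1/2) * (B.mulVec (fun i => (z - x) i) ⬝ᵥ (fun i => (z - x) i)))
      (innerSL ℝ p + (1/2 : ℝ) • (∑ i, ∑ j, ((B i j * (y - x) j) • (EuclideanSpace.proj i : E d →L[ℝ] ℝ)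
        + ((y - x) i) • (B i j • (EuclideanSpace.proj j : E d →L[ℝ] ℝ))))) y := by
  have h : (fun z : E d => (inner ℝ p (z - x) : ℝ)
      + (1/2) * (B.mulVec (fun i => (z - x) i) ⬝ᵥ (fun i => (z - x) i)))
      = fun z : E d => (inner ℝ p (z - x) : ℝ)
        + (1/2) * ∑ i, ∑ j, (B i j * (z - x) j) * (z - x) i := by
    funext z; rw [quadform_eq]
  rw [h]
  exact (inner_hasFDerivAt p x y).add ((quad_hasFDerivAt B x y).const_mul (1/2))

lemma psi_hasGradientAt (B : Matrix (Fin d) (Fin d) ℝ) (p x : E d) (y : E d) :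
    HasGradientAt (fun z : E d => (inner ℝ p (z - x) : ℝ)
        + (1/2) * (B.mulVec (fun i => (z - x) i) ⬝ᵥ (fun i => (z - x) i)))
      ((WithLp.equiv 2 (Fin d → ℝ)).symm (fun k =>
        p k + (1/2) * ((∑ j, B k j * (y - x) j) + ∑ i, B i k * (y - x) i))) y := by
  rw [hasGradientAt_iff_hasFDerivAt]
  have hD := psi_hasFDerivAt B p x y
  have heq : (InnerProductSpace.toDual ℝ (E d)) ((WithLp.equiv 2 (Fin d → ℝ)).symm (fun k =>
      p k + (1/2) * ((∑ j, B k j * (y - x) j) + ∑ i, B i k * (y - x) i)))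
      = innerSL ℝ p + (1/2 : ℝ) • (∑ i, ∑ j, ((B i j * (y - x) j) • (EuclideanSpace.proj i : E d →L[ℝ] ℝ)
        + ((y - x) i) • (B i j • (EuclideanSpace.proj j : E d →L[ℝ] ℝ)))) := by
    refine ContinuousLinearMap.coe_injective
      (Module.Basis.ext (EuclideanSpace.basisFun (Fin d) ℝ).toBasis ?_)
    intro k
    simp only [OrthonormalBasis.coe_toBasis, EuclideanSpace.basisFun_apply,
      ContinuousLinearMap.coe_coe, InnerProductSpace.toDual_apply_apply,
      ContinuousLinearMap.add_apply, ContinuousLinearMap.smul_apply, innerSL_apply_apply]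
    rw [quadCLM_apply B x y k, EuclideanSpace.inner_single_right]
    simp [EuclideanSpace.inner_single_right, smul_eq_mul]
  rw [heq]
  exact hD

lemma D_apply (B : Matrix (Fin d) (Fin d) ℝ) (p x : E d) (y : E d) (k : Fin d) :
    (innerSL ℝ p + (1/2 : ℝ) • (∑ i, ∑ j, ((B i j * (y - x) j) • (EuclideanSpace.proj i : E d →L[ℝ] ℝ)
        + ((y - x) i) • (B i j • (EuclideanSpace.proj j : E d →L[ℝ] ℝ)))))
      (EuclideanSpace.single k 1)
    = p k + (1/2) * ((∑ j, B k j * (y - x) j) + ∑ i, B i k * (y - x) i) := by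
  simp only [ContinuousLinearMap.add_apply, ContinuousLinearMap.smul_apply, innerSL_apply_apply]
  rw [quadCLM_apply B x y k, EuclideanSpace.inner_single_right]
  simp [smul_eq_mul]

lemma hk_hasFDerivAt (B : Matrix (Fin d) (Fin d) ℝ) (p x : E d) (k : Fin d) (y : E d) :
    HasFDerivAt (fun z : E d => p k + (1/2) * ((∑ j, B k j * (z - x) j) + ∑ i, B i k * (z - x) i))
      ((1/2 : ℝ) • ((∑ j, B k j • (EuclideanSpace.proj j : E d →L[ℝ] ℝ))
        + ∑ i, B i k • (EuclideanSpace.proj i : E d →L[ℝ] ℝ))) y := by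
  apply HasFDerivAt.const_add
  apply HasFDerivAt.const_mul
  exact (HasFDerivAt.fun_sum (fun j _ => (coord_hasFDerivAt x j y).const_mul (B k j))).add
    (HasFDerivAt.fun_sum (fun i _ => (coord_hasFDerivAt x i y).const_mul (B i k)))

lemma Lk_apply (B : Matrix (Fin d) (Fin d) ℝ) (k l : Fin d) :
    ((1/2 : ℝ) • ((∑ j, B k j • (EuclideanSpace.proj j : E d →L[ℝ] ℝ))
        + ∑ i, B i k • (EuclideanSpace.proj i : E d →L[ℝ] ℝ)))
      (EuclideanSpace.single l 1)
    = (1/2) * (B k l + B l k) := by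
  simp only [ContinuousLinearMap.smul_apply, ContinuousLinearMap.add_apply,
    ContinuousLinearMap.coe_sum', Finset.sum_apply, ContinuousLinearMap.coe_smul',
    Pi.smul_apply, PiLp.proj_apply, EuclideanSpace.single_apply, smul_eq_mul,
    mul_ite, mul_one, mul_zero]
  rw [Finset.sum_ite_eq' Finset.univ l, Finset.sum_ite_eq' Finset.univ l]
  simp

lemma psi_contDiff (B : Matrix (Fin d) (Fin d) ℝ) (p x : E d) :
    ContDiff ℝ 2 (fun z : E d => (inner ℝ p (z - x) : ℝ)
        + (1/2) * (B.mulVec (fun i => (z - x) i) ⬝ᵥ (fun i => (z - x) i))) := by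
  have hcoord : ∀ j : Fin d, ContDiff ℝ 2 (fun z : E d => (z - x) j) := by
    intro j
    have h : (fun z : E d => (z - x) j)
        = fun z : E d => (EuclideanSpace.proj j : E d →L[ℝ] ℝ) z - x j := by
      funext z; simp [PiLp.sub_apply]
    rw [h]
    exact ((EuclideanSpace.proj j : E d →L[ℝ] ℝ).contDiff).sub contDiff_const
  have h : (fun z : E d => (inner ℝ p (z - x) : ℝ)
      + (1/2) * (B.mulVec (fun i => (z - x) i) ⬝ᵥ (fun i => (z - x) i)))
      = fun z : E d => ((innerSL ℝ p) z - (inner ℝ p x : ℝ))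
        + (1/2) * ∑ i, ∑ j, (B i j * (z - x) j) * (z - x) i := by
    funext z; rw [quadform_eq]; simp [inner_sub_right]
  rw [h]
  apply ContDiff.add
  · exact ((innerSL ℝ p).contDiff).sub contDiff_const
  · apply ContDiff.mul contDiff_const
    apply ContDiff.sum; intro i _
    apply ContDiff.sum; intro j _
    exact (contDiff_const.mul (hcoord j)).mul (hcoord i)

end

set_option maxHeartbeats 1000000 in
/-- Every element `(b,p,A)` of the parabolic superjet of an upper
semicontinuous function `u` at `(t,x) ∈ (0,T) × O` is realised (after adding `ε·Id` to the
matrix) by the derivatives of a `C^{1,2}` test function `φ` such that `u − φ` has a local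
maximum at `(t,x)`. -/
theorem superjet_realised_by_test_function
    (d : ℕ) (hd : 0 < d) (ε T : ℝ) (hε : 0 < ε) (hT : 0 < T)
    (O : Set (E d)) (hOne : O.Nonempty) (hOopen : IsOpen O)
    (u : ℝ → E d → ℝ)
    (husc : UpperSemicontinuousOn (fun p : ℝ × E d => u p.1 p.2) (Ioo 0 T ×ˢ O))
    (t : ℝ) (x : E d) (ht : t ∈ Ioo (0:ℝ) T) (hx : x ∈ O)
    (b : ℝ) (p : E d) (A : Matrix (Fin d) (Fin d) ℝ)
    (hjet : MemSuperjet T O u t x b p A) :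
    ∃ φ : ℝ → E d → ℝ, C12On T O φ ∧
      ptime φ t x = b ∧ pgrad φ t x = p ∧
      phess φ t x = A + ε • (1 : Matrix (Fin d) (Fin d) ℝ) ∧
      IsLocalMaxOn (fun q : ℝ × E d => u q.1 q.2 - φ q.1 q.2) (Ioo 0 T ×ˢ O) (t, x) := by
  obtain ⟨hAsymm, hjet2⟩ := hjet
  set B : Matrix (Fin d) (Fin d) ℝ := A + ε • (1 : Matrix (Fin d) (Fin d) ℝ) with hBdef
  have hBs : ∀ i j, B j i = B i j := by
    intro i j
    simp only [hBdef, Matrix.add_apply, Matrix.smul_apply, Matrix.one_apply, smul_eq_mul]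
    rw [hAsymm.apply i j]
    by_cases h : i = j
    · subst h; rfl
    · rw [if_neg h, if_neg (Ne.symm h)]
  have hdot : ∀ y : E d, ((fun i => y i) ⬝ᵥ (fun i => y i) : ℝ) = ‖y‖^2 := by
    intro y
    rw [← real_inner_self_eq_norm_sq]
    simp [PiLp.inner_apply, dotProduct, RCLike.inner_apply]
    rw [EuclideanSpace.norm_eq, Real.sq_sqrt (Finset.sum_nonneg fun i _ => sq_nonneg _)]; simp [sq]
  have hBform : ∀ v : Fin d → ℝ, B.mulVec v ⬝ᵥ v = A.mulVec v ⬝ᵥ v + ε * (v ⬝ᵥ v) := by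
    intro v
    simp only [hBdef, Matrix.add_mulVec, Matrix.smul_mulVec, Matrix.one_mulVec,
      add_dotProduct, smul_dotProduct, smul_eq_mul]
  set Fq : ℝ × E d → ℝ := fun q =>
    u q.1 q.2 - u t x - b * (q.1 - t) - (inner ℝ p (q.2 - x) : ℝ)
      - (1/2) * (B.mulVec (fun i => (q.2 - x) i) ⬝ᵥ (fun i => (q.2 - x) i)) with hFqdef
  have hv0 : (fun i => ((x : E d) - x) i) = (0 : Fin d → ℝ) := by
    funext i; simp
  have hFq0 : Fq (t, x) = 0 := by
    simp [hFqdef, hv0]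
  have hF : ∀ e > (0:ℝ), ∃ δ > (0:ℝ), ∀ q : ℝ × E d, q ∈ Ioo 0 T ×ˢ O → q ≠ (t, x) →
      max |q.1 - t| ‖q.2 - x‖ < δ →
      Fq q ≤ e * |q.1 - t| + (e - ε/2) * ‖q.2 - x‖^2 := by
    intro e he
    have h := hjet2 e he
    rw [eventually_nhdsWithin_iff, Metric.eventually_nhds_iff] at h
    obtain ⟨δ, hδ, hh⟩ := h
    refine ⟨δ, hδ, ?_⟩
    intro q hq hne hlt
    have hdist : dist q (t, x) < δ := by
      rw [Prod.dist_eq, Real.dist_eq, dist_eq_norm]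
      exact hlt
    have hA := hh hdist ⟨hq, by simpa using hne⟩
    have hq2 : B.mulVec (fun i => (q.2 - x) i) ⬝ᵥ (fun i => (q.2 - x) i)
        = A.mulVec (fun i => (q.2 - x) i) ⬝ᵥ (fun i => (q.2 - x) i) + ε * ‖q.2 - x‖^2 := by
      rw [hBform, hdot]
    rw [abs_sub_comm t q.1, norm_sub_rev x q.2] at hA
    simp only [hFqdef]
    rw [hq2]
    nlinarith [hA]
  obtain ⟨δ₀', hδ₀'pos, hδ₀'⟩ := hF (ε/4) (by positivity)
  set δ₀ := δ₀'/2 with hδ₀def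
  have hδ₀pos : 0 < δ₀ := by positivity
  have hbox : ∀ q : ℝ × E d, q ∈ Ioo 0 T ×ˢ O → q ≠ (t, x) →
      |q.1 - t| ≤ δ₀ → ‖q.2 - x‖ ≤ δ₀ →
      Fq q ≤ (ε/4) * |q.1 - t| - (ε/4) * ‖q.2 - x‖^2 := by
    intro q hq hne h1 h2
    have := hδ₀' q hq hne (by rw [max_lt_iff]; exact ⟨by simp only [hδ₀def] at h1; linarith,
      by simp only [hδ₀def] at h2; linarith⟩)
    nlinarith [this]
  set K : ℝ → Set (ℝ × E d) := fun r =>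
    {q : ℝ × E d | q ∈ Ioo 0 T ×ˢ O ∧ |q.1 - t| ≤ min r δ₀ ∧ ‖q.2 - x‖ ≤ δ₀} with hKdef
  set m : ℝ → ℝ := fun r => sSup ((fun q => max (Fq q) 0) '' K r) with hmdef
  have htx_mem : ∀ r ≥ (0:ℝ), (t, x) ∈ K r := by
    intro r hr
    refine ⟨Set.mem_prod.mpr ⟨ht, hx⟩, ?_, ?_⟩
    · simp only [sub_self, abs_zero]
      exact le_min hr hδ₀pos.le
    · simp [hδ₀pos.le]
  have helt : ∀ r, ∀ q ∈ K r, max (Fq q) 0 ≤ max ((ε/4) * δ₀) 0 := by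
    intro r q hq
    rcases eq_or_ne q (t, x) with h | h
    · rw [h, hFq0, max_self]; exact le_max_right _ _
    · have h1 : |q.1 - t| ≤ δ₀ := le_trans hq.2.1 (min_le_right _ _)
      have hb := hbox q hq.1 h h1 hq.2.2
      have hFle : Fq q ≤ (ε/4) * δ₀ := by
        nlinarith [sq_nonneg ‖q.2 - x‖, abs_nonneg (q.1 - t)]
      exact max_le_max hFle le_rfl
  have hbdd : ∀ r, BddAbove ((fun q => max (Fq q) 0) '' K r) := by
    intro r
    exact ⟨max ((ε/4) * δ₀) 0, by rintro v ⟨q, hq, rfl⟩; exact helt r q hq⟩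
  have hKempty : ∀ r < (0:ℝ), K r = ∅ := by
    intro r hr
    ext q
    simp only [hKdef, Set.mem_setOf_eq, Set.mem_empty_iff_false, iff_false]
    rintro ⟨-, h1, -⟩
    have := le_trans h1 (min_le_left r δ₀)
    linarith [abs_nonneg (q.1 - t)]
  have hm_nonneg : ∀ r, 0 ≤ m r := by
    intro r
    rcases le_or_gt 0 r with h | h
    · have h0 : (0:ℝ) ∈ (fun q => max (Fq q) 0) '' K r :=
        ⟨(t, x), htx_mem r h, by show max (Fq (t, x)) 0 = 0; rw [hFq0]; exact max_self 0⟩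
      exact le_csSup (hbdd r) h0
    · simp [hmdef, hKempty r h, Real.sSup_empty]
  have hm0 : ∀ r ≤ (0:ℝ), m r = 0 := by
    intro r hr
    rcases lt_or_eq_of_le hr with h | h
    · simp [hmdef, hKempty r h, Real.sSup_empty]
    · subst h
      refine le_antisymm ?_ (hm_nonneg 0)
      apply Real.sSup_le _ le_rfl
      rintro v ⟨q, hq, rfl⟩
      show max (Fq q) 0 ≤ 0
      rcases eq_or_ne q (t, x) with hc | hc
      · rw [hc, hFq0]; simp
      · have h1 : |q.1 - t| ≤ 0 := le_trans hq.2.1 (min_le_left _ _)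
        have h1' : |q.1 - t| = 0 := le_antisymm h1 (abs_nonneg _)
        have hb := hbox q hq.1 hc (le_trans h1 hδ₀pos.le) hq.2.2
        rw [h1'] at hb
        apply max_le _ le_rfl
        have hc2 := mul_nonneg (show (0:ℝ) ≤ ε/4 by positivity) (sq_nonneg ‖q.2 - x‖)
        have htest : ε / 4 * 0 - ε / 4 * ‖q.2 - x‖ ^ 2 ≤ 0 := by linarith only [hc2]
        exact le_trans hb htest
  have hm_mono : Monotone m := by
    intro r r' hrr'
    rcases lt_or_ge r 0 with h | h
    · rw [hm0 r h.le]; exact hm_nonneg r'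
    · apply csSup_le_csSup (hbdd r')
        ⟨_, Set.mem_image_of_mem _ (htx_mem r h)⟩
      apply Set.image_mono
      intro q hq
      exact ⟨hq.1, le_trans hq.2.1 (min_le_min hrr' le_rfl), hq.2.2⟩
  have hm_lil : ∀ e > (0:ℝ), ∃ δ > (0:ℝ), ∀ r ∈ Icc (0:ℝ) δ, m r ≤ e * r := by
    intro e he
    set e2 := min e (ε/4) with he2def
    have he2 : 0 < e2 := lt_min he (by positivity)
    obtain ⟨δ', hδ'pos, hδ'⟩ := hF e2 he2
    refine ⟨min (δ'/2) ((δ'/2)^2), by positivity, ?_⟩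
    intro r hr
    have hr0 := hr.1
    have hrle1 : r ≤ δ'/2 := le_trans hr.2 (min_le_left _ _)
    have hrle2 : r ≤ (δ'/2)^2 := le_trans hr.2 (min_le_right _ _)
    apply Real.sSup_le _ (by positivity)
    rintro v ⟨q, hq, rfl⟩
    show max (Fq q) 0 ≤ e * r
    apply max_le _ (by positivity)
    rcases eq_or_ne q (t, x) with hcase | hcase
    · rw [hcase, hFq0]; positivity
    have hq1 : |q.1 - t| ≤ r := le_trans hq.2.1 (min_le_left _ _)
    rcases lt_or_ge ‖q.2 - x‖ (δ'/2) with hc | hc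
    · have hmlt : max |q.1 - t| ‖q.2 - x‖ < δ' := max_lt (by linarith) (by linarith)
      have hsm := hδ' q hq.1 hcase hmlt
      have he2e : e2 ≤ e := min_le_left _ _
      have he2ε : e2 ≤ ε/4 := min_le_right _ _
      have hneg : (e2 - ε/2) * ‖q.2 - x‖^2 ≤ 0 :=
        mul_nonpos_of_nonpos_of_nonneg (by linarith) (sq_nonneg _)
      have hh1 : e2 * |q.1 - t| ≤ e2 * r := mul_le_mul_of_nonneg_left hq1 he2.le
      have hh2 : e2 * r ≤ e * r := mul_le_mul_of_nonneg_right he2e hr0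
      refine le_trans hsm ?_
      linarith only [hneg, hh1, hh2]
    · have hb := hbox q hq.1 hcase (le_trans hq.2.1 (min_le_right _ _)) hq.2.2
      have hsq : (δ'/2)^2 ≤ ‖q.2 - x‖^2 := by
        apply pow_le_pow_left₀ (by positivity) hc
      have c1 : ε/4 * |q.1 - t| ≤ ε/4 * r := mul_le_mul_of_nonneg_left hq1 (by positivity)
      have c2 : ε/4 * (δ'/2)^2 ≤ ε/4 * ‖q.2 - x‖^2 := mul_le_mul_of_nonneg_left hsq (by positivity)
      have c3 : ε/4 * r ≤ ε/4 * (δ'/2)^2 := mul_le_mul_of_nonneg_left hrle2 (by positivity)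
      refine le_trans hb ?_
      linarith only [c1, c2, c3, mul_nonneg he.le hr0]
  have hm_key : ∀ q : ℝ × E d, q ∈ Ioo 0 T ×ˢ O → |q.1 - t| ≤ δ₀ → ‖q.2 - x‖ ≤ δ₀ →
      Fq q ≤ m |q.1 - t| := by
    intro q hq h1 h2
    have hqK : q ∈ K |q.1 - t| := ⟨hq, le_min le_rfl h1, h2⟩
    calc Fq q ≤ max (Fq q) 0 := le_max_left _ _
      _ ≤ m |q.1 - t| := le_csSup (hbdd _) (Set.mem_image_of_mem _ hqK)
  obtain ⟨W, g, hgcont, hW', hg0, hWnn, hW0, hWm⟩ :=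
    exists_C1_majorant m hm_mono hm0 hm_nonneg hm_lil
  set φ : ℝ → E d → ℝ := fun s y =>
    u t x + (b * (s - t) + W (s - t) + W (t - s))
      + ((inner ℝ p (y - x) : ℝ)
        + (1/2) * (B.mulVec (fun i => (y - x) i) ⬝ᵥ (fun i => (y - x) i))) with hφdef
  have hWc : Continuous W := by
    rw [continuous_iff_continuousAt]; exact fun r => (hW' r).continuousAt
  have htime : ∀ (s : ℝ) (y : E d),
      HasDerivAt (fun s' => φ s' y) (b + g (s - t) - g (t - s)) s := by
    intro s y
    have h1 : HasDerivAt (fun s' : ℝ => b * (s' - t)) b s := by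
      simpa using ((hasDerivAt_id s).sub_const t).const_mul b
    have h2 : HasDerivAt (fun s' : ℝ => W (s' - t)) (g (s - t)) s := by
      simpa [Function.comp_def] using (hW' (s - t)).comp s ((hasDerivAt_id s).sub_const t)
    have h3 : HasDerivAt (fun s' : ℝ => W (t - s')) (-g (t - s)) s := by
      simpa [Function.comp_def] using
        (hW' (t - s)).comp s ((hasDerivAt_const s t).sub (hasDerivAt_id s))
    have h4 := (((h1.add h2).add h3).const_add (u t x)).add_const
      ((inner ℝ p (y - x) : ℝ)
        + (1/2) * (B.mulVec (fun i => (y - x) i) ⬝ᵥ (fun i => (y - x) i)))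
    have hval : b + g (s - t) - g (t - s) = b + g (s - t) + -g (t - s) := by ring
    simp only [hφdef]
    rw [hval]
    exact h4
  have hptime : ∀ (s : ℝ) (y : E d), ptime φ s y = b + g (s - t) - g (t - s) :=
    fun s y => (htime s y).deriv
  set G : E d → E d := fun y => (WithLp.equiv 2 (Fin d → ℝ)).symm (fun k =>
    p k + (1/2) * ((∑ j, B k j * (y - x) j) + ∑ i, B i k * (y - x) i)) with hGdef
  have hgrad : ∀ (s : ℝ) (y : E d), HasGradientAt (fun z => φ s z) (G y) y := by
    intro s y
    have h := psi_hasGradientAt B p x y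
    rw [hasGradientAt_iff_hasFDerivAt] at h ⊢
    simp only [hφdef]
    exact h.const_add _
  have hpgrad : ∀ (s : ℝ) (y : E d), pgrad φ s y = G y := fun s y => (hgrad s y).gradient
  have hGx : G x = p := by
    simp only [hGdef, sub_self]
    have hz : ∀ k : Fin d, ((0 : E d)) k = (0:ℝ) := fun k => rfl
    refine (Equiv.symm_apply_eq _).mpr ?_
    funext k
    simp [hz]
  have hDfull : ∀ (s : ℝ) (y : E d), fderiv ℝ (fun z => φ s z) y
      = innerSL ℝ p + (1/2 : ℝ) • (∑ i, ∑ j,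
        ((B i j * (y - x) j) • (EuclideanSpace.proj i : E d →L[ℝ] ℝ)
        + ((y - x) i) • (B i j • (EuclideanSpace.proj j : E d →L[ℝ] ℝ)))) := by
    intro s y
    apply HasFDerivAt.fderiv
    simp only [hφdef]
    exact (psi_hasFDerivAt B p x y).const_add _
  have hphess : ∀ (s : ℝ) (y : E d), phess φ s y = B := by
    intro s y
    funext i j
    show fderiv ℝ (fun z => fderiv ℝ (fun w => φ s w) z (EuclideanSpace.single j 1)) y
      (EuclideanSpace.single i 1) = B i j
    have hfun : (fun z => fderiv ℝ (fun w => φ s w) z (EuclideanSpace.single j 1))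
        = fun z : E d => p j + (1/2) * ((∑ j', B j j' * (z - x) j')
          + ∑ i', B i' j * (z - x) i') := by
      funext z
      rw [hDfull s z, D_apply]
    rw [hfun, (hk_hasFDerivAt B p x j y).fderiv, Lk_apply]
    rw [hBs i j]; ring
  have hcoordc : ∀ j : Fin d, Continuous (fun y : E d => (y - x) j) := by
    intro j
    have h : (fun y : E d => (y - x) j)
        = fun y : E d => (EuclideanSpace.proj j : E d →L[ℝ] ℝ) y - x j := by
      funext y; simp [PiLp.sub_apply]
    rw [h]
    exact ((EuclideanSpace.proj j : E d →L[ℝ] ℝ).continuous).sub continuous_const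
  have hψcont : Continuous (fun y : E d => (inner ℝ p (y - x) : ℝ)
      + (1/2) * (B.mulVec (fun i => (y - x) i) ⬝ᵥ (fun i => (y - x) i))) :=
    (psi_contDiff B p x).continuous
  have hGc : Continuous G := by
    simp only [hGdef]
    apply (PiLp.continuous_toLp 2 (fun _ : Fin d => ℝ)).comp
    apply continuous_pi
    intro k
    apply continuous_const.add
    apply continuous_const.mul
    exact (continuous_finset_sum _ fun j _ => continuous_const.mul (hcoordc j)).add
      (continuous_finset_sum _ fun i _ => continuous_const.mul (hcoordc i))
  have hC12 : C12On T O φ := by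
    refine ⟨?_, ?_, ?_, ?_, ?_, ?_⟩
    · apply Continuous.continuousOn
      simp only [hφdef]
      exact (continuous_const.add
        (((continuous_const.mul (continuous_fst.sub continuous_const)).add
          (hWc.comp (continuous_fst.sub continuous_const))).add
          (hWc.comp (continuous_const.sub continuous_fst)))).add
        (hψcont.comp continuous_snd)
    · intro t' _ x' _
      rw [hptime t' x']
      exact htime t' x'
    · intro t' _ x' _
      apply ContDiff.contDiffAt
      simp only [hφdef]
      exact contDiff_const.add (psi_contDiff B p x)
    · have h : (fun q : ℝ × E d => ptime φ q.1 q.2)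
          = fun q : ℝ × E d => b + g (q.1 - t) - g (t - q.1) :=
        funext fun q => hptime q.1 q.2
      rw [h]
      exact ((continuous_const.add (hgcont.comp
        (continuous_fst.sub continuous_const))).sub
        (hgcont.comp (continuous_const.sub continuous_fst))).continuousOn
    · have h : (fun q : ℝ × E d => pgrad φ q.1 q.2) = fun q : ℝ × E d => G q.2 :=
        funext fun q => hpgrad q.1 q.2
      rw [h]
      exact (hGc.comp continuous_snd).continuousOn
    · have h : (fun q : ℝ × E d => phess φ q.1 q.2) = fun _ => B :=
        funext fun q => hphess q.1 q.2
      rw [h]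
      exact continuousOn_const
  have hφtx : φ t x = u t x := by
    simp only [hφdef, sub_self, hW0]
    simp [hv0]
  refine ⟨φ, hC12, ?_, ?_, ?_, ?_⟩
  · rw [hptime t x, sub_self, hg0]; ring
  · rw [hpgrad t x, hGx]
  · exact hphess t x
  · unfold IsLocalMaxOn IsMaxFilter
    rw [eventually_nhdsWithin_iff, Metric.eventually_nhds_iff]
    refine ⟨δ₀, hδ₀pos, ?_⟩
    intro q hdist hq
    have hd := hdist
    rw [Prod.dist_eq, max_lt_iff, Real.dist_eq, dist_eq_norm] at hd
    have hd1 : |q.1 - t| ≤ δ₀ := hd.1.le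
    have hd2 : ‖q.2 - x‖ ≤ δ₀ := hd.2.le
    have hkey := hm_key q hq hd1 hd2
    have hrel : u q.1 q.2 - φ q.1 q.2 = Fq q - W (q.1 - t) - W (t - q.1) := by
      simp only [hφdef, hFqdef]; ring
    have hgoal : u q.1 q.2 - φ q.1 q.2 ≤ u t x - φ t x := by
      rw [hφtx, sub_self, hrel]
      rcases le_total t q.1 with hc | hc
      · rw [abs_of_nonneg (by linarith : (0:ℝ) ≤ q.1 - t)] at hkey
        have := hWm (q.1 - t) (by linarith)
        linarith [hWnn (t - q.1)]
      · rw [abs_of_nonpos (by linarith : q.1 - t ≤ 0), neg_sub] at hkey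
        have := hWm (t - q.1) (by linarith)
        linarith [hWnn (q.1 - t)]
    exact hgoal
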